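/- Let F be a field, n > 2 an integer, and a₁, …, a_{n+1} pairwise distinct nonzero elements of F. Let i be an integer with 2 ≤ i and 2i ≤ n + 1. For a subset S of {1, …, n+1} write π(S) = ∏_{t∈S} a_t. If the family (π(S)), indexed by all i-element subsets S of {1,…,n+1}, is almost cyclic, then for every integer j with 1 ≤ j < i the products π(S′), indexed by the j-element subsets S′ of {1,…,n+1}, are pairwise distinct. -/

import Mathlib

/-- A family of elements of `F` is almost cyclic if at most one value
occurs with multiplicity greater than one. -/
def AlmostCyclic {I F : Type*} (e : I → F) : Prop :=
  ∀ i j k l : I, i ≠ j → e i = e j → k ≠ l → e k = e l → e i = e k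

/-- Let `a₁,…,a_{n+1}` be pairwise distinct nonzero elements of a field `F`
(`n > 2`), and `2 ≤ i` with `2i ≤ n+1`.  If the family of products
`π(S) = ∏_{t ∈ S} a_t` over the `i`-element subsets `S` of `{1,…,n+1}` is
almost cyclic, then for every `1 ≤ j < i` the products over `j`-element
subsets are pairwise distinct. -/
theorem stmt5 {F : Type*} [Field F] {n : ℕ} (hn : 2 < n)
    (a : Fin (n + 1) → F) (ha0 : ∀ t, a t ≠ 0) (hinj : Function.Injective a)
    (i : ℕ) (hi2 : 2 ≤ i) (hi : 2 * i ≤ n + 1)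
    (hac : AlmostCyclic
      (fun S : {S : Finset (Fin (n + 1)) // S.card = i} => ∏ t ∈ S.1, a t)) :
    ∀ j : ℕ, 1 ≤ j → j < i → ∀ S T : Finset (Fin (n + 1)),
      S.card = j → T.card = j → (∏ t ∈ S, a t) = (∏ t ∈ T, a t) → S = T := by
  intro j hj1 hji S T hS hT hprod
  by_contra hne
  have hST : (S ∪ T).card ≤ 2 * j := by
    calc (S ∪ T).card ≤ S.card + T.card := Finset.card_union_le _ _
    _ = 2 * j := by rw [hS, hT]; ring
  set C := (S ∪ T)ᶜ with hC
  have hCcard : i - j + 1 ≤ C.card := by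
    have hc : C.card = (n + 1) - (S ∪ T).card := by
      rw [hC, Finset.card_compl, Fintype.card_fin]
    omega
  obtain ⟨U, hUC, hUcard⟩ := Finset.exists_subset_card_eq (s := C) (n := i - j) (by omega)
  obtain ⟨u, hu⟩ : U.Nonempty := Finset.card_pos.mp (by omega)
  obtain ⟨u', hu'⟩ : (C \ U).Nonempty := Finset.card_pos.mp (by
    rw [Finset.card_sdiff_of_subset hUC]; omega)
  have hu'C := (Finset.mem_sdiff.mp hu').1
  have hu'U := (Finset.mem_sdiff.mp hu').2
  set U' := insert u' (U.erase u) with hU'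
  have hu'e : u' ∉ U.erase u := fun h => hu'U (Finset.mem_of_mem_erase h)
  have hU'card : U'.card = i - j := by
    rw [hU', Finset.card_insert_of_notMem hu'e, Finset.card_erase_of_mem hu]
    omega
  have hU'C : U' ⊆ C := by
    intro x hx
    rcases Finset.mem_insert.mp hx with h | h
    · exact h ▸ hu'C
    · exact hUC (Finset.mem_of_mem_erase h)
  -- disjointness of any subset of C with S and with T
  have hdisj : ∀ V ⊆ C, Disjoint S V ∧ Disjoint T V := by
    intro V hV
    constructor <;>
    · rw [Finset.disjoint_right]
      intro x hxV hxS
      have hxC := hV hxV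
      rw [hC, Finset.mem_compl] at hxC
      exact hxC (by simp [hxS])
  obtain ⟨hSU, hTU⟩ := hdisj U hUC
  obtain ⟨hSU', hTU'⟩ := hdisj U' hU'C
  have cardSU : (S ∪ U).card = i := by
    rw [Finset.card_union_of_disjoint hSU, hS, hUcard]; omega
  have cardTU : (T ∪ U).card = i := by
    rw [Finset.card_union_of_disjoint hTU, hT, hUcard]; omega
  have cardSU' : (S ∪ U').card = i := by
    rw [Finset.card_union_of_disjoint hSU', hS, hU'card]; omega
  have cardTU' : (T ∪ U').card = i := by
    rw [Finset.card_union_of_disjoint hTU', hT, hU'card]; omega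
  -- distinctness of the i-subsets
  have hneq : ∀ V : Finset (Fin (n+1)), Disjoint S V → Disjoint T V →
      S ∪ V ≠ T ∪ V := by
    intro V hSV hTV h
    apply hne
    ext x
    constructor
    · intro hx
      have : x ∈ T ∪ V := h ▸ Finset.mem_union_left V hx
      rcases Finset.mem_union.mp this with h1 | h1
      · exact h1
      · exact absurd hx (Finset.disjoint_right.mp hSV h1)
    · intro hx
      have : x ∈ S ∪ V := h ▸ Finset.mem_union_left V hx
      rcases Finset.mem_union.mp this with h1 | h1
      · exact h1
      · exact absurd hx (Finset.disjoint_right.mp hTV h1)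
  have key := hac ⟨S ∪ U, cardSU⟩ ⟨T ∪ U, cardTU⟩ ⟨S ∪ U', cardSU'⟩ ⟨T ∪ U', cardTU'⟩
    (fun h => hneq U hSU hTU (congrArg Subtype.val h))
    (by simp only [Finset.prod_union hSU, Finset.prod_union hTU, hprod])
    (fun h => hneq U' hSU' hTU' (congrArg Subtype.val h))
    (by simp only [Finset.prod_union hSU', Finset.prod_union hTU', hprod])
  simp only [Finset.prod_union hSU, Finset.prod_union hSU'] at key
  have hSne : (∏ t ∈ S, a t) ≠ 0 := Finset.prod_ne_zero_iff.mpr fun t _ => ha0 t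
  have hUU' : (∏ t ∈ U, a t) = ∏ t ∈ U', a t := mul_left_cancel₀ hSne key
  rw [hU', Finset.prod_insert hu'e, ← Finset.mul_prod_erase U a hu] at hUU'
  have hPne : (∏ t ∈ U.erase u, a t) ≠ 0 :=
    Finset.prod_ne_zero_iff.mpr fun t _ => ha0 t
  have : a u = a u' := mul_right_cancel₀ hPne hUU'
  exact hu'U ((hinj this) ▸ hu)
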